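/- Let x₁, x₂ : [0,T) → ℝ^N solve the spherical mean curvature flow ODE x'(t) = -∑_{i=1}^g (m_i/⟨x(t), n_i⟩) n_i + n·x(t), where m_i > 0, n = ∑ m_i, and ⟨x_j(t), n_i⟩ < 0 for all i, j, t. Then (d/dt)‖x₁(t)-x₂(t)‖² ≥ 2n‖x₁(t)-x₂(t)‖², and hence ‖x₁(t)-x₂(t)‖ ≥ e^{nt}‖x₁(0)-x₂(0)‖ for all t ∈ [0,T). -/

import Mathlib

open scoped RealInnerProductSpace

theorem aux_term (p q mm : ℝ) (hp : p < 0) (hq : q < 0) (hmm : 0 < mm) :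
    0 ≤ (mm / q - mm / p) * (p - q) := by
  have hpq : 0 < p * q := mul_pos_of_neg_of_neg hp hq
  have h : (mm / q - mm / p) * (p - q) * (p * q) = mm * (p - q) ^ 2 := by
    field_simp [hp.ne, hq.ne]
  have h2 : (mm / q - mm / p) * (p - q) = mm * (p - q) ^ 2 / (p * q) :=
    eq_div_of_mul_eq hpq.ne' h
  rw [h2]; positivity

theorem stmt_15 {N g : ℕ} (T : ℝ) (hT : 0 < T)
    (nv : Fin g → EuclideanSpace ℝ (Fin N)) (m : Fin g → ℝ)
    (hm : ∀ i, 0 < m i) (n : ℝ) (hn : n = ∑ i, m i)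
    (x₁ x₂ : ℝ → EuclideanSpace ℝ (Fin N))
    (hneg₁ : ∀ t ∈ Set.Ico (0 : ℝ) T, ∀ i, ⟪x₁ t, nv i⟫ < 0)
    (hneg₂ : ∀ t ∈ Set.Ico (0 : ℝ) T, ∀ i, ⟪x₂ t, nv i⟫ < 0)
    (hode₁ : ∀ t ∈ Set.Ico (0 : ℝ) T,
      HasDerivAt x₁ (-∑ i, (m i / ⟪x₁ t, nv i⟫) • nv i + n • x₁ t) t)
    (hode₂ : ∀ t ∈ Set.Ico (0 : ℝ) T,
      HasDerivAt x₂ (-∑ i, (m i / ⟪x₂ t, nv i⟫) • nv i + n • x₂ t) t) :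
    (∀ t ∈ Set.Ico (0 : ℝ) T,
        2 * n * ‖x₁ t - x₂ t‖ ^ 2 ≤ deriv (fun s => ‖x₁ s - x₂ s‖ ^ 2) t) ∧
      ∀ t ∈ Set.Ico (0 : ℝ) T,
        Real.exp (n * t) * ‖x₁ 0 - x₂ 0‖ ≤ ‖x₁ t - x₂ t‖ := by
  set d : ℝ → EuclideanSpace ℝ (Fin N) := fun t => x₁ t - x₂ t with hd
  have hderiv : ∀ t ∈ Set.Ico (0 : ℝ) T, ∃ f',
      HasDerivAt (fun s => ‖x₁ s - x₂ s‖ ^ 2) f' t ∧ 2 * n * ‖d t‖ ^ 2 ≤ f' := by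
    intro t ht
    have hdd : HasDerivAt d
        ((-∑ i, (m i / ⟪x₁ t, nv i⟫) • nv i + n • x₁ t)
          - (-∑ i, (m i / ⟪x₂ t, nv i⟫) • nv i + n • x₂ t)) t :=
      (hode₁ t ht).sub (hode₂ t ht)
    set D := (-∑ i, (m i / ⟪x₁ t, nv i⟫) • nv i + n • x₁ t)
          - (-∑ i, (m i / ⟪x₂ t, nv i⟫) • nv i + n • x₂ t) with hD
    have hf : HasDerivAt (fun s => ‖x₁ s - x₂ s‖ ^ 2) (⟪d t, D⟫ + ⟪D, d t⟫) t := by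
      have h := (hdd.inner ℝ hdd : HasDerivAt (fun s => ⟪d s, d s⟫) (⟪d t, D⟫ + ⟪D, d t⟫) t)
      have heq : (fun s => ⟪d s, d s⟫) = fun s => ‖x₁ s - x₂ s‖ ^ 2 := by
        funext s; rw [real_inner_self_eq_norm_sq]
      rwa [heq] at h
    refine ⟨_, hf, ?_⟩
    have hsym : ⟪D, d t⟫ = ⟪d t, D⟫ := real_inner_comm _ _
    rw [hsym]
    have key : n * ‖d t‖ ^ 2 ≤ ⟪d t, D⟫ := by
      have hdx : ⟪d t, x₁ t⟫ - ⟪d t, x₂ t⟫ = ⟪d t, d t⟫ := by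
        rw [hd]; simp only [inner_sub_right]
      have hexp : ⟪d t, D⟫ =
          (∑ i, (m i / ⟪x₂ t, nv i⟫ - m i / ⟪x₁ t, nv i⟫) * ⟪d t, nv i⟫)
            + n * ‖d t‖ ^ 2 := by
        rw [hD, inner_sub_right, inner_add_right, inner_add_right, inner_neg_right,
          inner_neg_right, inner_sum, inner_sum]
        simp only [real_inner_smul_right]
        rw [← real_inner_self_eq_norm_sq, ← hdx]
        simp only [sub_mul, Finset.sum_sub_distrib]
        ring
      rw [hexp]
      have hsum : 0 ≤ ∑ i, (m i / ⟪x₂ t, nv i⟫ - m i / ⟪x₁ t, nv i⟫) * ⟪d t, nv i⟫ := by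
        refine Finset.sum_nonneg fun i _ => ?_
        have hdt : ⟪d t, nv i⟫ = ⟪x₁ t, nv i⟫ - ⟪x₂ t, nv i⟫ := by
          rw [hd]; simp [inner_sub_left]
        rw [hdt]
        exact aux_term _ _ _ (hneg₁ t ht i) (hneg₂ t ht i) (hm i)
      linarith
    linarith
  have part1 : ∀ t ∈ Set.Ico (0 : ℝ) T,
      2 * n * ‖x₁ t - x₂ t‖ ^ 2 ≤ deriv (fun s => ‖x₁ s - x₂ s‖ ^ 2) t := by
    intro t ht
    obtain ⟨f', hf, hle⟩ := hderiv t ht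
    rw [hf.deriv]; exact hle
  refine ⟨part1, ?_⟩
  -- Grönwall
  set F : ℝ → ℝ := fun s => Real.exp (-(2 * n) * s) * ‖x₁ s - x₂ s‖ ^ 2 with hFdef
  have hFd : ∀ t ∈ Set.Ico (0 : ℝ) T, ∃ F',
      HasDerivAt F F' t ∧ 0 ≤ F' := by
    intro t ht
    obtain ⟨f', hf, hle⟩ := hderiv t ht
    have hexp : HasDerivAt (fun s => Real.exp (-(2 * n) * s))
        (-(2 * n) * Real.exp (-(2 * n) * t)) t := by
      simpa [mul_comm] using ((hasDerivAt_id t).const_mul (-(2 * n))).exp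
    refine ⟨_, hexp.mul hf, ?_⟩
    have hE : 0 < Real.exp (-(2 * n) * t) := Real.exp_pos _
    have : -(2 * n) * Real.exp (-(2 * n) * t) * ‖x₁ t - x₂ t‖ ^ 2
        + Real.exp (-(2 * n) * t) * f'
        = Real.exp (-(2 * n) * t) * (f' - 2 * n * ‖x₁ t - x₂ t‖ ^ 2) := by ring
    rw [this]
    exact mul_nonneg hE.le (by simpa using sub_nonneg.mpr hle)
  have hmono : MonotoneOn F (Set.Ico 0 T) := by
    apply monotoneOn_of_deriv_nonneg (convex_Ico 0 T)
    · intro t ht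
      obtain ⟨F', hF, _⟩ := hFd t ht
      exact hF.continuousAt.continuousWithinAt
    · intro t ht
      rw [interior_Ico] at ht
      obtain ⟨F', hF, _⟩ := hFd t (Set.Ioo_subset_Ico_self ht)
      exact hF.differentiableAt.differentiableWithinAt
    · intro t ht
      rw [interior_Ico] at ht
      obtain ⟨F', hF, hle⟩ := hFd t (Set.Ioo_subset_Ico_self ht)
      rw [hF.deriv]; exact hle
  intro t ht
  have h0 : (0 : ℝ) ∈ Set.Ico (0 : ℝ) T := ⟨le_refl 0, hT⟩
  have hm0 : F 0 ≤ F t := hmono h0 ht ht.1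
  have hE : 0 < Real.exp (-(2 * n) * t) := Real.exp_pos _
  have hsq : (Real.exp (n * t) * ‖x₁ 0 - x₂ 0‖) ^ 2 ≤ ‖x₁ t - x₂ t‖ ^ 2 := by
    have h1 : ‖x₁ 0 - x₂ 0‖ ^ 2 ≤ Real.exp (-(2 * n) * t) * ‖x₁ t - x₂ t‖ ^ 2 := by
      simpa [hFdef] using hm0
    have h2 : Real.exp (n * t) ^ 2 * Real.exp (-(2 * n) * t) = 1 := by
      rw [← Real.exp_nat_mul, ← Real.exp_add,
        show (2:ℕ) * (n * t) + -(2 * n) * t = 0 by push_cast; ring, Real.exp_zero]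
    calc (Real.exp (n * t) * ‖x₁ 0 - x₂ 0‖) ^ 2
        = Real.exp (n * t) ^ 2 * ‖x₁ 0 - x₂ 0‖ ^ 2 := by ring
      _ ≤ Real.exp (n * t) ^ 2 * (Real.exp (-(2 * n) * t) * ‖x₁ t - x₂ t‖ ^ 2) := by
          exact mul_le_mul_of_nonneg_left h1 (by positivity)
      _ = (Real.exp (n * t) ^ 2 * Real.exp (-(2 * n) * t)) * ‖x₁ t - x₂ t‖ ^ 2 := by ring
      _ = ‖x₁ t - x₂ t‖ ^ 2 := by rw [h2, one_mul]
  have h3 : 0 ≤ Real.exp (n * t) * ‖x₁ 0 - x₂ 0‖ := by positivity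
  exact (pow_le_pow_iff_left₀ h3 (norm_nonneg _) two_ne_zero).mp hsq
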